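/- arXiv:1506.00432 — 3 statements merged into one kernel-verified Lean document; each statement's English description precedes it below -/
import Mathlib

section
/- Let P ⊆ ℤⁿ be a lattice and ω = (-1+√-3)/2. Regarding 𝒫 = P + ωP as a lattice in ℝ^{2n} via the identification of ℂⁿ with ℝ^{2n}, the minimum Euclidean distance of P + ωP equals the minimum Euclidean distance of P. -/
/-- ω = (-1+√-3)/2 -/
noncomputable def ω : ℂ := (-1 + Real.sqrt 3 * Complex.I) / 2

/-- Embedding of a pair (p, q) ∈ ℤⁿ × ℤⁿ as the vector p + ωq ∈ ℂⁿ,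
which is identified with (p - q/2, (√3/2)q) ∈ ℝ^{2n} (the Euclidean/Hermitian
norms agree under this identification). -/
noncomputable def toC (n : ℕ) (p q : Fin n → ℤ) : EuclideanSpace ℂ (Fin n) :=
  WithLp.toLp 2 (fun i => (p i : ℂ) + ω * (q i : ℂ))

/-- Embedding of ℤⁿ in Euclidean space ℝⁿ. -/
noncomputable def toR (n : ℕ) (p : Fin n → ℤ) : EuclideanSpace ℝ (Fin n) :=
  WithLp.toLp 2 (fun i => (p i : ℝ))

lemma key (a b : ℝ) : ‖((a:ℂ) + ω * b)‖ ^ 2 = (a^2 + b^2 + (a-b)^2)/2 := by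
  have h3 : (Real.sqrt 3:ℝ)^2 = 3 := Real.sq_sqrt (by norm_num)
  rw [Complex.sq_norm, Complex.normSq_apply]
  simp [ω, Complex.add_re, Complex.add_im, Complex.mul_re, Complex.mul_im,
    Complex.div_re, Complex.div_im, Complex.normSq_apply]
  ring_nf
  nlinarith [h3]

lemma normR_sq (n : ℕ) (z : Fin n → ℤ) : ‖toR n z‖^2 = ∑ i, ((z i : ℝ))^2 := by
  rw [EuclideanSpace.norm_eq, Real.sq_sqrt (by positivity)]
  simp [toR, sq_abs]

lemma normC_sq (n : ℕ) (a b : Fin n → ℤ) :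
    ‖toC n a b‖^2 = (‖toR n a‖^2 + ‖toR n b‖^2 + ‖toR n (a-b)‖^2)/2 := by
  rw [EuclideanSpace.norm_eq, Real.sq_sqrt (by positivity), normR_sq, normR_sq, normR_sq]
  rw [← Finset.sum_add_distrib, ← Finset.sum_add_distrib, Finset.sum_div]
  refine Finset.sum_congr rfl fun i _ => ?_
  simp only [toC, PiLp.toLp_apply]
  rw [show ((a i : ℤ):ℂ) = ((a i : ℝ):ℂ) by push_cast; ring,
      show ((b i : ℤ):ℂ) = ((b i : ℝ):ℂ) by push_cast; ring, key]
  simp only [Pi.sub_apply]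
  push_cast
  ring

lemma subC (n : ℕ) (p q p' q' : Fin n → ℤ) :
    toC n p q - toC n p' q' = toC n (p - p') (q - q') := by
  ext i
  simp [toC]
  ring

lemma subR (n : ℕ) (x y : Fin n → ℤ) : toR n x - toR n y = toR n (x - y) := by
  ext i; simp [toR]

lemma toR_eq_zero (n : ℕ) (z : Fin n → ℤ) (h : toR n z = 0) : z = 0 := by
  funext i
  have := congrArg (fun v : EuclideanSpace ℝ (Fin n) => v i) h
  simpa [toR] using this

lemma toC_inj (n : ℕ) (p q p' q' : Fin n → ℤ) (h : toC n p q = toC n p' q') :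
    p = p' ∧ q = q' := by
  have h0 : toC n (p - p') (q - q') = 0 := by
    rw [← subC, h, sub_self]
  have h1 : ‖toC n (p - p') (q - q')‖ ^ 2 = 0 := by rw [h0]; simp
  rw [normC_sq] at h1
  have ha := sq_nonneg ‖toR n (p - p')‖
  have hb := sq_nonneg ‖toR n (q - q')‖
  have hc := sq_nonneg ‖toR n (p - p' - (q - q'))‖
  have hA : ‖toR n (p - p')‖ = 0 := by nlinarith
  have hB : ‖toR n (q - q')‖ = 0 := by nlinarith
  constructor
  · have := toR_eq_zero n _ (norm_eq_zero.mp hA); rwa [sub_eq_zero] at this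
  · have := toR_eq_zero n _ (norm_eq_zero.mp hB); rwa [sub_eq_zero] at this

lemma sq_le_imp {m d : ℝ} (hm : 0 ≤ m) (hd : 0 ≤ d) (h : m^2 ≤ d^2) : m ≤ d := by
  nlinarith

/-- for a lattice P ⊆ ℤⁿ, the minimum Euclidean distance of
𝒫 = P + ωP (regarded as a lattice in ℝ^{2n}) equals that of P. -/
theorem stmt_1 (n : ℕ) (P : AddSubgroup (Fin n → ℤ)) :
    sInf {d : ℝ | ∃ p ∈ P, ∃ q ∈ P, ∃ p' ∈ P, ∃ q' ∈ P,
        toC n p q ≠ toC n p' q' ∧ d = dist (toC n p q) (toC n p' q')} =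
      sInf {d : ℝ | ∃ x ∈ P, ∃ y ∈ P, x ≠ y ∧ d = dist (toR n x) (toR n y)} := by
  set S : Set ℝ := {d : ℝ | ∃ p ∈ P, ∃ q ∈ P, ∃ p' ∈ P, ∃ q' ∈ P,
        toC n p q ≠ toC n p' q' ∧ d = dist (toC n p q) (toC n p' q')} with hS
  set T : Set ℝ := {d : ℝ | ∃ x ∈ P, ∃ y ∈ P, x ≠ y ∧ d = dist (toR n x) (toR n y)} with hT
  have hTS : T ⊆ S := by
    rintro d ⟨x, hx, y, hy, hxy, rfl⟩
    refine ⟨x, hx, 0, P.zero_mem, y, hy, 0, P.zero_mem, ?_, ?_⟩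
    · intro h
      exact hxy (toC_inj n x 0 y 0 h).1
    · have h1 : dist (toC n x 0) (toC n y 0) ^ 2 = dist (toR n x) (toR n y) ^ 2 := by
        rw [dist_eq_norm, dist_eq_norm, subC, subR, normC_sq]
        simp [normR_sq]
      have hm := dist_nonneg (x := toC n x 0) (y := toC n y 0)
      have hd := dist_nonneg (x := toR n x) (y := toR n y)
      linarith [sq_le_imp hm hd h1.le, sq_le_imp hd hm h1.ge]
  have hSlb : ∀ d ∈ S, 0 ≤ d := by
    rintro d ⟨p, _, q, _, p', _, q', _, _, rfl⟩; exact dist_nonneg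
  have hTlb : ∀ d ∈ T, 0 ≤ d := by
    rintro d ⟨x, _, y, _, _, rfl⟩; exact dist_nonneg
  have hSbdd : BddBelow S := ⟨0, hSlb⟩
  have hTbdd : BddBelow T := ⟨0, hTlb⟩
  by_cases hne : ∃ z ∈ P, z ≠ (0 : Fin n → ℤ)
  · obtain ⟨z, hz, hz0⟩ := hne
    have hTne : T.Nonempty := ⟨dist (toR n z) (toR n 0), z, hz, 0, P.zero_mem, hz0, rfl⟩
    have hSne : S.Nonempty := hTne.mono hTS
    set m := sInf T with hm
    have hm0 : 0 ≤ m := le_csInf hTne hTlb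
    -- m ≤ ‖toR n w‖ for nonzero w ∈ P
    have hkey : ∀ w ∈ P, w ≠ (0 : Fin n → ℤ) → m ≤ ‖toR n w‖ := by
      intro w hw hw0
      have : ‖toR n w‖ ∈ T := by
        refine ⟨w, hw, 0, P.zero_mem, hw0, ?_⟩
        rw [dist_eq_norm, subR, sub_zero]
      exact csInf_le hTbdd this
    refine le_antisymm (csInf_le_csInf hSbdd hTne hTS) (le_csInf hSne ?_)
    rintro d ⟨p, hp, q, hq, p', hp', q', hq', hne', rfl⟩
    rw [dist_eq_norm, subC]
    set a := p - p' with ha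
    set b := q - q' with hb
    have hab : a ≠ 0 ∨ b ≠ 0 := by
      by_contra hc
      push_neg at hc
      apply hne'
      have h1 : p = p' := by have := hc.1; rwa [ha, sub_eq_zero] at this
      have h2 : q = q' := by have := hc.2; rwa [hb, sub_eq_zero] at this
      rw [h1, h2]
    have haP : a ∈ P := P.sub_mem hp hp'
    have hbP : b ∈ P := P.sub_mem hq hq'
    have habP : a - b ∈ P := P.sub_mem haP hbP
    apply sq_le_imp hm0 (norm_nonneg _)
    rw [normC_sq]
    have hna := sq_nonneg ‖toR n a‖
    have hnb := sq_nonneg ‖toR n b‖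
    have hnc := sq_nonneg ‖toR n (a - b)‖
    rcases hab with h | h
    · by_cases hb0 : b = 0
      · have hab0 : a - b ≠ 0 := by rw [hb0, sub_zero]; exact h
        have j1 := hkey a haP h
        have j2 := hkey (a - b) habP hab0
        nlinarith [pow_le_pow_left₀ hm0 j1 2, pow_le_pow_left₀ hm0 j2 2]
      · have j1 := hkey a haP h
        have j2 := hkey b hbP hb0
        nlinarith [pow_le_pow_left₀ hm0 j1 2, pow_le_pow_left₀ hm0 j2 2]
    · by_cases ha0 : a = 0
      · have hab0 : a - b ≠ 0 := by rw [ha0, zero_sub]; simpa using h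
        have j1 := hkey b hbP h
        have j2 := hkey (a - b) habP hab0
        nlinarith [pow_le_pow_left₀ hm0 j1 2, pow_le_pow_left₀ hm0 j2 2]
      · have j1 := hkey a haP ha0
        have j2 := hkey b hbP h
        nlinarith [pow_le_pow_left₀ hm0 j1 2, pow_le_pow_left₀ hm0 j2 2]
  · push_neg at hne
    have hSe : S = ∅ := by
      ext d
      simp only [Set.mem_empty_iff_false, iff_false]
      rintro ⟨p, hp, q, hq, p', hp', q', hq', hne', _⟩
      apply hne'
      rw [hne p hp, hne q hq, hne p' hp', hne q' hq']
    have hTe : T = ∅ := by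
      ext d
      simp only [Set.mem_empty_iff_false, iff_false]
      rintro ⟨x, hx, y, hy, hxy, _⟩
      exact hxy ((hne x hx).trans (hne y hy).symm)
    rw [hSe, hTe]
end

section
/- Let L ⊆ A_{n-1} = {x ∈ ℤⁿ : Σxᵢ = 0} be a lattice of rank n-1, and let χ be a nonzero integer. Let B be the lattice generated by L together with the vector e = (0,...,0,χ). Then the minimum Euclidean distance of B satisfies d_E(B) ≥ min{d_E(L), χ/√n}. -/
open scoped RealInnerProductSpace

/-- let L ⊆ A_{n-1} = {x ∈ ℤⁿ : Σxᵢ = 0} be a lattice of rank n-1 and χ a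
nonzero integer.  If B is the lattice generated by L together with e = (0,…,0,χ), then
the minimum Euclidean distance of B satisfies d_E(B) ≥ min{d_E(L), |χ|/√n}, i.e. every
pair of distinct points of B is at distance at least min{d_E(L), |χ|/√n}. -/
theorem stmt_10 (n : ℕ) (hn : 0 < n) (L : Submodule ℤ (EuclideanSpace ℝ (Fin n)))
    (hLint : ∀ x ∈ L, ∀ i, ∃ m : ℤ, x i = m)
    (hLsum : ∀ x ∈ L, ∑ i, x i = 0)
    (hrank : Module.finrank ℤ L = n - 1)
    (χ : ℤ) (hχ : χ ≠ 0) :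
    ∀ x ∈ L ⊔ Submodule.span ℤ
        ({(WithLp.toLp 2 (fun i : Fin n => if (i : ℕ) = n - 1 then (χ : ℝ) else 0) : EuclideanSpace ℝ (Fin n))} :
          Set (EuclideanSpace ℝ (Fin n))),
      ∀ y ∈ L ⊔ Submodule.span ℤ
        ({(WithLp.toLp 2 (fun i : Fin n => if (i : ℕ) = n - 1 then (χ : ℝ) else 0) : EuclideanSpace ℝ (Fin n))} :
          Set (EuclideanSpace ℝ (Fin n))),
      x ≠ y →
      min (sInf {d : ℝ | ∃ a ∈ L, ∃ b ∈ L, a ≠ b ∧ d = dist a b})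
          ((|χ| : ℝ) / Real.sqrt n) ≤ dist x y := by
  intro x hx y hy hxy
  set e : EuclideanSpace ℝ (Fin n) :=
    (WithLp.toLp 2 (fun i : Fin n => if (i : ℕ) = n - 1 then (χ : ℝ) else 0) : EuclideanSpace ℝ (Fin n)) with he
  obtain ⟨a₁, ha₁, b₁, hb₁, rfl⟩ := Submodule.mem_sup.mp hx
  obtain ⟨a₂, ha₂, b₂, hb₂, rfl⟩ := Submodule.mem_sup.mp hy
  obtain ⟨k₁, rfl⟩ := Submodule.mem_span_singleton.mp hb₁
  obtain ⟨k₂, rfl⟩ := Submodule.mem_span_singleton.mp hb₂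
  set z : EuclideanSpace ℝ (Fin n) := (a₁ + k₁ • e) - (a₂ + k₂ • e) with hz
  have hzne : z ≠ 0 := sub_ne_zero.mpr hxy
  have hdist : dist (a₁ + k₁ • e) (a₂ + k₂ • e) = ‖z‖ := dist_eq_norm _ _
  have hj : n - 1 < n := Nat.sub_lt hn one_pos
  have hesum : ∑ i, e i = (χ : ℝ) := by
    have : ∀ i : Fin n, e i = if i = (⟨n - 1, hj⟩ : Fin n) then (χ : ℝ) else 0 := by
      intro i
      simp only [he, PiLp.toLp_apply, Fin.ext_iff]
    rw [Fintype.sum_congr _ _ this]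
    simp
  have hzi : ∀ i, z i = (a₁ i - a₂ i) + ((k₁ : ℝ) - k₂) * e i := by
    intro i
    show ((a₁ + k₁ • e) - (a₂ + k₂ • e)) i = _
    simp only [PiLp.sub_apply, PiLp.add_apply, PiLp.smul_apply, zsmul_eq_mul]
    ring
  have hzsum : ∑ i, z i = ((k₁ - k₂ : ℤ) : ℝ) * χ := by
    rw [Fintype.sum_congr _ _ hzi, Finset.sum_add_distrib, Finset.sum_sub_distrib,
      ← Finset.mul_sum, hLsum a₁ ha₁, hLsum a₂ ha₂, hesum]
    push_cast
    ring
  rcases eq_or_ne k₁ k₂ with hk | hk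
  · -- z ∈ L, use the infimum bound
    subst hk
    refine le_trans (min_le_left _ _) ?_
    have hmem : dist (a₁ + k₁ • e) (a₂ + k₁ • e) ∈
        {d : ℝ | ∃ a ∈ L, ∃ b ∈ L, a ≠ b ∧ d = dist a b} := by
      refine ⟨a₁, ha₁, a₂, ha₂, ?_, ?_⟩
      · intro h; exact hxy (by rw [h])
      · rw [dist_eq_norm, dist_eq_norm]
        congr 1
        abel
    exact csInf_le ⟨0, fun d hd => by obtain ⟨a, _, b, _, _, rfl⟩ := hd; exact dist_nonneg⟩ hmem
  · refine le_trans (min_le_right _ _) ?_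
    rw [hdist]
    set o : EuclideanSpace ℝ (Fin n) := WithLp.toLp 2 (fun _ => 1) with ho
    have hinner : ⟪o, z⟫ = ∑ i, z i := by
      simp [PiLp.inner_apply, ho]
    have hno : ‖o‖ = Real.sqrt n := by
      rw [EuclideanSpace.norm_eq]
      simp [ho]
    have hcs : |∑ i, z i| ≤ Real.sqrt n * ‖z‖ := by
      rw [← hinner, ← hno]
      exact abs_real_inner_le_norm o z
    have hsn : (0 : ℝ) < Real.sqrt n := Real.sqrt_pos.mpr (by exact_mod_cast hn)
    rw [div_le_iff₀ hsn]
    have h1 : (|χ| : ℝ) ≤ |∑ i, z i| := by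
      rw [hzsum, abs_mul]
      have hk1 : (1 : ℝ) ≤ |((k₁ - k₂ : ℤ) : ℝ)| := by
        rw [← Int.cast_abs]
        exact_mod_cast Int.one_le_abs (sub_ne_zero.mpr hk)
      have h2 : (|χ| : ℝ) = |(χ : ℝ)| := by push_cast; rfl
      rw [h2]
      nlinarith [abs_nonneg ((χ : ℝ))]
    calc (|χ| : ℝ) ≤ |∑ i, z i| := h1
      _ ≤ Real.sqrt n * ‖z‖ := hcs
      _ = ‖z‖ * Real.sqrt n := mul_comm _ _
end

section
/- Let C be a q-ary code of length n containing the zero codeword, with minimum Hamming distance d_H(C), whose alphabet consists of elements β₁ = 0, β₂, ..., β_q ∈ 𝒪_K representing the distinct residues modulo a prime ideal 𝔓 = (t) of 𝒪_K = ℤ[ω]. Let 𝒫 ⊆ 𝒪_Kⁿ be a packing with minimum squared Euclidean distance d_E²(𝒫) satisfying d_H(C) ≥ Q · d_E²(𝒫), where Q = N(𝔓). Then the set C + t·𝒫 = {c + tp : c ∈ C, p ∈ 𝒫} has minimum squared Euclidean distance at least Q · d_E²(𝒫), when 𝒪_Kⁿ is regarded as a subset of ℝ^{2n}. -/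
attribute [local instance] Classical.propDecidable

/-- The ring of Eisenstein integers 𝒪_K = ℤ[ω] ⊆ ℂ. -/
noncomputable def EisensteinInts : Subalgebra ℤ ℂ := Algebra.adjoin ℤ ({ω} : Set ℂ)


lemma omega_sq : ω ^ 2 = -1 - ω := by
  have h3 : ((Real.sqrt 3 : ℝ) : ℂ) ^ 2 = 3 := by
    rw [← Complex.ofReal_pow, Real.sq_sqrt (by norm_num : (3:ℝ) ≥ 0)]; norm_num
  unfold ω
  field_simp
  ring_nf
  rw [Complex.I_sq, h3]
  ring

lemma omega_mem : ω ∈ EisensteinInts := Algebra.subset_adjoin rfl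

lemma eis_repr' {z : ℂ} (hz : z ∈ EisensteinInts) : ∃ a b : ℤ, z = a + b * ω := by
  induction hz using Algebra.adjoin_induction with
  | mem y hy =>
    rw [Set.mem_singleton_iff] at hy
    exact ⟨0, 1, by rw [hy]; push_cast; ring⟩
  | algebraMap r => exact ⟨r, 0, by rw [eq_intCast]; push_cast; ring⟩
  | add y z _ _ hy hz =>
    obtain ⟨a, b, rfl⟩ := hy; obtain ⟨c, d, rfl⟩ := hz
    exact ⟨a + c, b + d, by push_cast; ring⟩
  | mul y z _ _ hy hz =>
    obtain ⟨a, b, rfl⟩ := hy; obtain ⟨c, d, rfl⟩ := hz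
    refine ⟨a * c - b * d, a * d + b * c - b * d, ?_⟩
    have h : (a + b * ω) * (c + d * ω) =
        a * c + (a * d + b * c) * ω + (b * d) * ω ^ 2 := by ring
    rw [h, omega_sq]
    push_cast
    ring

lemma absSq (a b : ℤ) :
    ‖((a:ℂ) + b * ω)‖ ^ 2 = ((a^2 - a*b + b^2 : ℤ) : ℝ) := by
  have h : ((a:ℂ) + b * ω) = Complex.mk ((a:ℝ) - b/2) (b * Real.sqrt 3 / 2) := by
    rw [Complex.ext_iff]
    simp [ω, Complex.div_re, Complex.div_im]
    constructor <;> ring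
  rw [Complex.sq_norm, h, Complex.normSq_mk]
  have h3 : Real.sqrt 3 ^ 2 = 3 := Real.sq_sqrt (by norm_num)
  push_cast
  nlinarith [h3]

noncomputable def ωO : EisensteinInts := ⟨ω, omega_mem⟩

example : IsDomain EisensteinInts := inferInstance

lemma omega_im : ω.im = Real.sqrt 3 / 2 := by
  simp [ω, Complex.div_im]

lemma eis_li : LinearIndependent ℤ ![(1 : EisensteinInts), ωO] := by
  rw [LinearIndependent.pair_iff]
  intro s u hsu
  have h : ((s : ℂ)) + (u : ℂ) * ω = 0 := by
    have := congrArg (fun x : EisensteinInts => (x : ℂ)) hsu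
    push_cast at this
    simpa [ωO] using this
  have him := congrArg Complex.im h
  simp [Complex.add_im, Complex.mul_im, omega_im] at him
  rw [him] at h
  push_cast at h
  simp at h
  exact ⟨by exact_mod_cast h, him⟩

lemma eis_span : ∀ x : EisensteinInts, x ∈ Submodule.span ℤ (Set.range ![(1 : EisensteinInts), ωO]) := by
  intro x
  obtain ⟨a, b, hab⟩ := eis_repr' x.2
  have : x = a • (1 : EisensteinInts) + b • ωO := by
    apply Subtype.ext
    push_cast
    simpa [ωO] using hab
  rw [this]
  exact Submodule.add_mem _ (Submodule.smul_mem _ _ (Submodule.subset_span ⟨0, rfl⟩))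
    (Submodule.smul_mem _ _ (Submodule.subset_span ⟨1, rfl⟩))

noncomputable def eisBasis : Module.Basis (Fin 2) ℤ EisensteinInts :=
  Module.Basis.mk eis_li (fun x _ => eis_span x)

lemma eisBasis0 : (eisBasis 0 : EisensteinInts) = 1 := by
  rw [eisBasis, Module.Basis.mk_apply]; rfl

lemma eisBasis1 : eisBasis 1 = ωO := by
  rw [eisBasis, Module.Basis.mk_apply]; rfl


lemma card_quot_fin2 {S : Type*} [CommRing S] [IsDomain S] (b : Module.Basis (Fin 2) ℤ S)
    (t : S) (ht0 : t ≠ 0) (a c : ℤ)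
    (h0 : t * b 0 = a • b 0 + c • b 1)
    (h1 : t * b 1 = (-c) • b 0 + (a - c) • b 1) :
    Nat.card (S ⧸ Ideal.span ({t} : Set S)) = (a ^ 2 - a * c + c ^ 2).natAbs := by
  set I : Ideal S := Ideal.span {t} with hIdef
  have hI : I ≠ ⊥ := by rw [hIdef, Ne, Ideal.span_singleton_eq_bot]; exact ht0
  have hmem : ∀ x : S, t * x ∈ I := fun x => Ideal.mem_span_singleton.mpr ⟨x, rfl⟩
  let g : S →ₗ[ℤ] I :=
    { toFun := fun x => ⟨t * x, hmem x⟩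
      map_add' := fun x y => Subtype.ext (by simp [mul_add])
      map_smul' := fun z x => Subtype.ext (by simp; ring) }
  have hginj : Function.Injective g := by
    intro x y hxy
    exact mul_left_cancel₀ ht0 (congrArg Subtype.val hxy)
  have hgsurj : Function.Surjective g := by
    rintro ⟨y, hy⟩
    obtain ⟨x, rfl⟩ := Ideal.mem_span_singleton.mp hy
    exact ⟨x, rfl⟩
  let e : S ≃ₗ[ℤ] I := LinearEquiv.ofBijective g ⟨hginj, hgsurj⟩
  let f : S →ₗ[ℤ] S := (I.subtype.restrictScalars ℤ) ∘ₗ (e : S →ₗ[ℤ] I)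
  have hf : LinearMap.det f = a ^ 2 - a * c + c ^ 2 := by
    have hM : f = Matrix.toLin b b !![a, -c; c, a - c] := by
      apply b.ext
      intro i
      match i with
      | 0 =>
        rw [Matrix.toLin_self, show f (b 0) = t * b 0 from rfl, h0, Fin.sum_univ_two]
        norm_num
      | 1 =>
        rw [Matrix.toLin_self, show f (b 1) = t * b 1 from rfl, h1, Fin.sum_univ_two]
        norm_num
    rw [hM, LinearMap.det_toLin, Matrix.det_fin_two_of]
    ring
  let a_ := I.smithCoeffs b hI
  let b' := I.ringBasis b hI
  let ab := I.selfBasis b hI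
  have hcard : Nat.card (S ⧸ I) = ∏ i, (a_ i).natAbs := by
    rw [Nat.card_congr (I.quotientEquivPiZMod b hI).toEquiv, Nat.card_pi]
    simp [Nat.card_zmod]
    rfl
  let e' : S ≃ₗ[ℤ] I := b'.equiv ab (Equiv.refl _)
  let f' : S →ₗ[ℤ] S := (I.subtype.restrictScalars ℤ) ∘ₗ (e' : S →ₗ[ℤ] I)
  have hf' : LinearMap.det f' = ∏ i, a_ i := by
    have hM : f' = Matrix.toLin b' b' (Matrix.diagonal a_) := by
      apply b'.ext
      intro i
      have h1' : f' (b' i) = (ab i : S) := by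
        have he : e' (b' i) = ab i := b'.equiv_apply i ab (Equiv.refl _)
        simp only [f', LinearMap.comp_apply, LinearEquiv.coe_coe, he,
          LinearMap.coe_restrictScalars, Submodule.coe_subtype]
      rw [Matrix.toLin_self, h1', I.selfBasis_def b hI i]
      rw [Finset.sum_eq_single i]
      · rw [Matrix.diagonal_apply_eq]
      · intro j _ hj
        rw [Matrix.diagonal_apply_ne _ hj, zero_smul]
      · intro h; exact absurd (Finset.mem_univ i) h
    rw [hM, LinearMap.det_toLin, Matrix.det_diagonal]
  have hassoc : Associated (LinearMap.det f) (LinearMap.det f') :=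
    LinearMap.associated_det_comp_equiv _ _ _
  have hnat : (LinearMap.det f).natAbs = (LinearMap.det f').natAbs :=
    Int.natAbs_eq_iff_associated.mpr hassoc
  rw [hcard]
  have hprod : ∏ i, (a_ i).natAbs = (∏ i, a_ i).natAbs :=
    (map_prod Int.natAbsHom a_ Finset.univ).symm
  rw [hprod, ← hf', ← hnat, hf]

lemma eis_card_quot (t : EisensteinInts) (ht0 : t ≠ 0) :
    (Nat.card (EisensteinInts ⧸ Ideal.span ({t} : Set EisensteinInts)) : ℝ)
      = ‖(t : ℂ)‖ ^ 2 := by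
  obtain ⟨a, c, hac⟩ := eis_repr' t.2
  have habs : ‖(t : ℂ)‖ ^ 2 = ((a ^ 2 - a * c + c ^ 2 : ℤ) : ℝ) := by
    rw [hac]; exact absSq a c
  have hN0 : (0 : ℝ) ≤ ((a ^ 2 - a * c + c ^ 2 : ℤ) : ℝ) := habs ▸ sq_nonneg _
  have hN0' : (0 : ℤ) ≤ a ^ 2 - a * c + c ^ 2 := by exact_mod_cast hN0
  have h0 : t * eisBasis 0 = a • eisBasis 0 + c • eisBasis 1 := by
    apply Subtype.ext
    push_cast [eisBasis0, eisBasis1, ωO]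
    simp only [zsmul_eq_mul]
    rw [hac]; ring
  have h1 : t * eisBasis 1 = (-c) • eisBasis 0 + (a - c) • eisBasis 1 := by
    apply Subtype.ext
    push_cast [eisBasis0, eisBasis1, ωO]
    simp only [zsmul_eq_mul]
    rw [hac]
    have hsq : (↑a + ↑c * ω) * ω = ↑a * ω + ↑c * (ω ^ 2) := by ring
    rw [hsq, omega_sq]
    push_cast
    ring
  rw [card_quot_fin2 eisBasis t ht0 a c h0 h1, habs]
  rw [Nat.cast_natAbs, abs_of_nonneg]
  exact_mod_cast hN0'

lemma eis_one_le {x : EisensteinInts} (hx : x ≠ 0) : (1 : ℝ) ≤ ‖(x : ℂ)‖ ^ 2 := by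
  obtain ⟨a, c, hac⟩ := eis_repr' x.2
  have hx' : ¬(a = 0 ∧ c = 0) := by
    rintro ⟨rfl, rfl⟩
    apply hx
    apply Subtype.ext
    rw [hac]; simp
  have hpos : (0 : ℤ) < a ^ 2 - a * c + c ^ 2 := by
    rcases eq_or_ne c 0 with rfl | hc
    · have ha : a ≠ 0 := by tauto
      have := Int.one_le_abs ha
      nlinarith [sq_abs a]
    · have := Int.one_le_abs hc
      nlinarith [sq_nonneg (2 * a - c), sq_abs c]
  rw [hac, absSq]
  exact_mod_cast hpos

/-- let C be a q-ary code of length n containing the zero codeword with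
minimum Hamming distance d_H(C), over the alphabet S ⊆ 𝒪_K (S contains 0 and represents
the Q distinct residues modulo the prime ideal 𝔓 = (t) of 𝒪_K = ℤ[ω], where Q = N(𝔓)
is the cardinality of 𝒪_K/𝔓).  Let Pk ⊆ 𝒪_Kⁿ be a packing with minimum squared Euclidean
distance d_E²(Pk) and suppose d_H(C) ≥ Q·d_E²(Pk).  Then C + t·Pk has minimum squared
Euclidean distance at least Q·d_E²(Pk) (with 𝒪_Kⁿ regarded as a subset of ℝ^{2n}, where
the squared Euclidean distance is Σᵢ |xᵢ - yᵢ|²). -/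
theorem stmt_13 (n : ℕ) (t : EisensteinInts) (ht0 : t ≠ 0)
    (hprime : (Ideal.span ({t} : Set EisensteinInts)).IsPrime)
    (Q : ℕ) (hQ : Nat.card (EisensteinInts ⧸ Ideal.span ({t} : Set EisensteinInts)) = Q)
    (S : Finset EisensteinInts) (hS0 : (0 : EisensteinInts) ∈ S) (hScard : S.card = Q)
    (hSrep : ∀ β ∈ S, ∀ β' ∈ S, β ≠ β' → ¬ t ∣ (β - β'))
    (C : Finset (Fin n → EisensteinInts)) (hCS : ∀ c ∈ C, ∀ i, c i ∈ S)
    (hC0 : (0 : Fin n → EisensteinInts) ∈ C)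
    (dH : ℕ) (hdH : ∀ c ∈ C, ∀ c' ∈ C, c ≠ c' → dH ≤ hammingDist c c')
    (Pk : Set (Fin n → EisensteinInts)) (dE2 : ℝ)
    (hdE2 : ∀ p ∈ Pk, ∀ p' ∈ Pk, p ≠ p' →
      dE2 ≤ ∑ i, ‖((p i : ℂ) - (p' i : ℂ))‖ ^ 2)
    (hbound : (Q : ℝ) * dE2 ≤ (dH : ℝ)) :
    ∀ c ∈ C, ∀ p ∈ Pk, ∀ c' ∈ C, ∀ p' ∈ Pk,
      (fun i => c i + t * p i) ≠ (fun i => c' i + t * p' i) →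
      (Q : ℝ) * dE2 ≤
        ∑ i, ‖(((c i + t * p i : EisensteinInts) : ℂ)
          - ((c' i + t * p' i : EisensteinInts) : ℂ))‖ ^ 2 := by
  intro c hc p hp c' hc' p' hp' hne
  have hQre : (Q : ℝ) = ‖(t : ℂ)‖ ^ 2 := by
    rw [← hQ]; exact eis_card_quot t ht0
  by_cases hcc : c = c'
  · subst hcc
    have hpp : p ≠ p' := by rintro rfl; exact hne rfl
    have hsum := hdE2 p hp p' hp' hpp
    have hterm : ∀ i : Fin n,
        ‖(((c i + t * p i : EisensteinInts) : ℂ)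
          - ((c i + t * p' i : EisensteinInts) : ℂ))‖ ^ 2
        = ‖(t : ℂ)‖ ^ 2 * ‖((p i : ℂ) - (p' i : ℂ))‖ ^ 2 := by
      intro i
      have h : (((c i + t * p i : EisensteinInts) : ℂ)
          - ((c i + t * p' i : EisensteinInts) : ℂ))
          = (t : ℂ) * ((p i : ℂ) - (p' i : ℂ)) := by push_cast; ring
      rw [h, norm_mul, mul_pow]
    calc (Q : ℝ) * dE2
        ≤ (Q : ℝ) * ∑ i, ‖((p i : ℂ) - (p' i : ℂ))‖ ^ 2 :=
          mul_le_mul_of_nonneg_left hsum (Nat.cast_nonneg Q)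
      _ = ∑ i, ‖(((c i + t * p i : EisensteinInts) : ℂ)
            - ((c i + t * p' i : EisensteinInts) : ℂ))‖ ^ 2 := by
          rw [hQre, Finset.mul_sum]
          exact Finset.sum_congr rfl fun i _ => (hterm i).symm
  · have hd := hdH c hc c' hc' hcc
    set D := Finset.univ.filter (fun i => c i ≠ c' i) with hD
    have hham : hammingDist c c' = D.card := rfl
    have hone : ∀ i ∈ D, (1 : ℝ) ≤ ‖(((c i + t * p i : EisensteinInts) : ℂ)
        - ((c' i + t * p' i : EisensteinInts) : ℂ))‖ ^ 2 := by
      intro i hi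
      have hci : c i ≠ c' i := (Finset.mem_filter.mp hi).2
      have hx : (c i + t * p i) - (c' i + t * p' i) ≠ 0 := by
        intro h
        apply hSrep (c i) (hCS c hc i) (c' i) (hCS c' hc' i) hci
        refine ⟨p' i - p i, ?_⟩
        have h2 : c i - c' i = t * p' i - t * p i := by linear_combination h
        rw [h2]; ring
      have h3 := eis_one_le hx
      have h4 : (((c i + t * p i) - (c' i + t * p' i) : EisensteinInts) : ℂ)
          = ((c i + t * p i : EisensteinInts) : ℂ)
            - ((c' i + t * p' i : EisensteinInts) : ℂ) := by push_cast; ring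
      rwa [h4] at h3
    calc (Q : ℝ) * dE2 ≤ (dH : ℝ) := hbound
      _ ≤ (hammingDist c c' : ℝ) := by exact_mod_cast hd
      _ = (D.card : ℝ) := by rw [hham]
      _ = ∑ _i ∈ D, (1 : ℝ) := by simp
      _ ≤ ∑ i ∈ D, ‖(((c i + t * p i : EisensteinInts) : ℂ)
            - ((c' i + t * p' i : EisensteinInts) : ℂ))‖ ^ 2 := Finset.sum_le_sum hone
      _ ≤ ∑ i, ‖(((c i + t * p i : EisensteinInts) : ℂ)
            - ((c' i + t * p' i : EisensteinInts) : ℂ))‖ ^ 2 :=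
          Finset.sum_le_sum_of_subset_of_nonneg (Finset.subset_univ D)
            (fun i _ _ => sq_nonneg _)
end
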